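/- Proposition (wuc games, second part): In a weakly unilaterally competitive bimatrix game Γ, every Nash equilibrium (x^N, y^N) has payoffs equal to the matrix game values: α(x^N,y^N) = v_A and β(x^N,y^N) = v_B. -/
import Mathlib


open Matrix

noncomputable section

/-- The set of mixed strategies: the standard simplex in `ℝ^m`. -/
def Simp (m : ℕ) : Set (Fin m → ℝ) := stdSimplex ℝ (Fin m)

/-- Bilinear payoff `xᵀ A y`. -/
def pay {m n : ℕ} (A : Matrix (Fin m) (Fin n) ℝ) (x : Fin m → ℝ) (y : Fin n → ℝ) : ℝ :=
  x ⬝ᵥ A.mulVec y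

/-- Payoff of a mixed strategy `x` against the pure strategy `j`: `α(x, e_j) = (xᵀA)_j`. -/
def purePay {m n : ℕ} (A : Matrix (Fin m) (Fin n) ℝ) (x : Fin m → ℝ) (j : Fin n) : ℝ :=
  Matrix.vecMul x A j

/-- Pure best replies of player II against `x`. -/
def BRII {m n : ℕ} (B : Matrix (Fin m) (Fin n) ℝ) (x : Fin m → ℝ) : Set (Fin n) :=
  {j | ∀ k, purePay B x k ≤ purePay B x j}

/-- Best-reply region `X(j)` of column `j`. -/
def XReg {m n : ℕ} (B : Matrix (Fin m) (Fin n) ℝ) (j : Fin n) : Set (Fin m → ℝ) :=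
  {x ∈ Simp m | j ∈ BRII B x}

/-- `D`: columns whose best-reply region has a fully mixed point. -/
def Dset {m n : ℕ} (B : Matrix (Fin m) (Fin n) ℝ) : Set (Fin n) :=
  {j | ∃ x ∈ XReg B j, ∀ i, 0 < x i}

/-- `E(j)`: columns of `B` payoff-equivalent to column `j`. -/
def Ecols {m n : ℕ} (B : Matrix (Fin m) (Fin n) ℝ) (j : Fin n) : Set (Fin n) :=
  {k | ∀ i, B i k = B i j}

/-- `min_j α(x, e_j)`. -/
def minPure {m n : ℕ} (A : Matrix (Fin m) (Fin n) ℝ) (x : Fin m → ℝ) : ℝ :=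
  sInf {w | ∃ j, w = purePay A x j}

/-- `max_j α(x, e_j)`. -/
def maxPure {m n : ℕ} (A : Matrix (Fin m) (Fin n) ℝ) (x : Fin m → ℝ) : ℝ :=
  sSup {w | ∃ j, w = purePay A x j}

/-- `max_{j ∈ BR_II(x)} α(x, e_j)`. -/
def maxBR {m n : ℕ} (A B : Matrix (Fin m) (Fin n) ℝ) (x : Fin m → ℝ) : ℝ :=
  sSup {w | ∃ j ∈ BRII B x, w = purePay A x j}

/-- Matrix game value `v_A = max_{x ∈ X} min_j α(x, e_j)`. -/
def matVal {m n : ℕ} (A : Matrix (Fin m) (Fin n) ℝ) : ℝ :=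
  sSup {v | ∃ x ∈ Simp m, v = minPure A x}

/-- `min_{k ∈ E(j)} α(x, e_k)`. -/
def minE {m n : ℕ} (A B : Matrix (Fin m) (Fin n) ℝ) (j : Fin n) (x : Fin m → ℝ) : ℝ :=
  sInf {w | ∃ k ∈ Ecols B j, w = purePay A x k}

/-- Commitment value `α^L = max_{j∈D} max_{x∈X(j)} min_{k∈E(j)} α(x,e_k)`. -/
def alphaL {m n : ℕ} (A B : Matrix (Fin m) (Fin n) ℝ) : ℝ :=
  sSup {v | ∃ j ∈ Dset B, ∃ x ∈ XReg B j, v = minE A B j x}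

/-- Highest leader payoff `α^H = max_{j : X(j)≠∅} max_{x∈X(j)} α(x,e_j)`. -/
def alphaH {m n : ℕ} (A B : Matrix (Fin m) (Fin n) ℝ) : ℝ :=
  sSup {v | ∃ j, ∃ x ∈ XReg B j, v = purePay A x j}

/-- Commitment optimal strategies of the leader (player I). -/
def XLset {m n : ℕ} (A B : Matrix (Fin m) (Fin n) ℝ) : Set (Fin m → ℝ) :=
  {x | ∃ j ∈ Dset B, x ∈ XReg B j ∧ minE A B j x = alphaL A B}

/-- Non-degeneracy for player I: no mixed strategy of player I has more pure best
replies (among player II's pure strategies) than the size of its support. -/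
def NondegFor {m n : ℕ} (B : Matrix (Fin m) (Fin n) ℝ) : Prop :=
  ∀ x ∈ Simp m, (BRII B x).ncard ≤ {i | x i ≠ 0}.ncard

/-- Nash equilibrium of the bimatrix game `(A,B)`. -/
def isNE {m n : ℕ} (A B : Matrix (Fin m) (Fin n) ℝ) (x : Fin m → ℝ) (y : Fin n → ℝ) : Prop :=
  x ∈ Simp m ∧ y ∈ Simp n ∧
  (∀ x' ∈ Simp m, pay A x' y ≤ pay A x y) ∧
  (∀ y' ∈ Simp n, pay B x y' ≤ pay B x y)

/-- Strategies of player I appearing in some Nash equilibrium. -/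
def NEX {m n : ℕ} (A B : Matrix (Fin m) (Fin n) ℝ) : Set (Fin m → ℝ) :=
  {x | ∃ y, isNE A B x y}

/-- Strategies of player II appearing in some Nash equilibrium. -/
def NEY {m n : ℕ} (A B : Matrix (Fin m) (Fin n) ℝ) : Set (Fin n → ℝ) :=
  {y | ∃ x, isNE A B x y}

/-- Weakly unilaterally competitive bimatrix game. -/
def WUC {m n : ℕ} (A B : Matrix (Fin m) (Fin n) ℝ) : Prop :=
  (∀ x₁ ∈ Simp m, ∀ x₂ ∈ Simp m, ∀ y ∈ Simp n,
    (pay A x₁ y > pay A x₂ y → pay B x₁ y ≤ pay B x₂ y) ∧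
    (pay A x₁ y = pay A x₂ y → pay B x₁ y = pay B x₂ y)) ∧
  (∀ y₁ ∈ Simp n, ∀ y₂ ∈ Simp n, ∀ x ∈ Simp m,
    (pay B x y₁ > pay B x y₂ → pay A x y₁ ≤ pay A x y₂) ∧
    (pay B x y₁ = pay B x y₂ → pay A x y₁ = pay A x y₂))

/-- Auxiliary: pure strategies lie in the simplex. -/
lemma pure_mem_Simp {m : ℕ} (i : Fin m) : (Pi.single i 1 : Fin m → ℝ) ∈ Simp m := by
  constructor
  · intro j
    by_cases h : j = i <;> simp [Pi.single_apply, h]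
  · simp

lemma pay_eq_sum {m n : ℕ} (A : Matrix (Fin m) (Fin n) ℝ) (x : Fin m → ℝ) (y : Fin n → ℝ) :
    pay A x y = ∑ j, y j * purePay A x j := by
  unfold pay purePay
  rw [Matrix.dotProduct_mulVec]
  simp [dotProduct, mul_comm]

lemma pay_pureRight {m n : ℕ} (A : Matrix (Fin m) (Fin n) ℝ) (x : Fin m → ℝ) (j : Fin n) :
    pay A x (Pi.single j 1) = purePay A x j := by
  rw [pay_eq_sum]
  simp [Pi.single_apply]

lemma pay_transpose {m n : ℕ} (A : Matrix (Fin m) (Fin n) ℝ) (x : Fin m → ℝ) (y : Fin n → ℝ) :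
    pay Aᵀ y x = pay A x y := by
  unfold pay
  rw [Matrix.mulVec_transpose, dotProduct_comm, Matrix.dotProduct_mulVec]

lemma purePay_set_eq {m n : ℕ} (A : Matrix (Fin m) (Fin n) ℝ) (x : Fin m → ℝ) :
    {w | ∃ j, w = purePay A x j} = Set.range (purePay A x) := by
  ext w; simp [eq_comm]

lemma minPure_le {m n : ℕ} (A : Matrix (Fin m) (Fin n) ℝ) (x : Fin m → ℝ) (j : Fin n) :
    minPure A x ≤ purePay A x j := by
  unfold minPure
  refine csInf_le ?_ ⟨j, rfl⟩
  rw [purePay_set_eq]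
  exact (Set.finite_range _).bddBelow

lemma le_minPure {m n : ℕ} (hn : 0 < n) (A : Matrix (Fin m) (Fin n) ℝ) (x : Fin m → ℝ)
    (c : ℝ) (h : ∀ j, c ≤ purePay A x j) : c ≤ minPure A x := by
  unfold minPure
  refine le_csInf ⟨purePay A x ⟨0, hn⟩, ⟨0, hn⟩, rfl⟩ ?_
  rintro b ⟨j, rfl⟩
  exact h j

/-- Key lemma for player I. -/
lemma keyI {m n : ℕ} (A B : Matrix (Fin m) (Fin n) ℝ) (hwuc : WUC A B)
    (xN : Fin m → ℝ) (yN : Fin n → ℝ) (hNE : isNE A B xN yN) :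
    pay A xN yN = matVal A := by
  obtain ⟨hxS, hyS, hA, hB⟩ := hNE
  have hn : 0 < n := by
    rcases Nat.eq_zero_or_pos n with h | h
    · exfalso
      have := hyS.2
      subst h
      simp at this
    · exact h
  set j0 : Fin n := ⟨0, hn⟩
  -- each coordinate of a simplex point is between 0 and 1
  have hcoord : ∀ x ∈ Simp m, ∀ i, x i ≤ 1 := by
    intro x hx i
    have h1 := hx.2
    calc x i ≤ ∑ k, x k := Finset.single_le_sum (fun k _ => hx.1 k) (Finset.mem_univ i)
    _ = 1 := h1
  -- uniform bound on purePay over the simplex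
  have hbound : ∀ x ∈ Simp m, purePay A x j0 ≤ ∑ i, |A i j0| := by
    intro x hx
    have : purePay A x j0 = ∑ i, x i * A i j0 := by
      simp [purePay, Matrix.vecMul, dotProduct]
    rw [this]
    refine Finset.sum_le_sum fun i _ => ?_
    calc x i * A i j0 ≤ x i * |A i j0| :=
          mul_le_mul_of_nonneg_left (le_abs_self _) (hx.1 i)
    _ ≤ 1 * |A i j0| := mul_le_mul_of_nonneg_right (hcoord x hx i) (abs_nonneg _)
    _ = |A i j0| := one_mul _
  have hbddAbove : BddAbove {v | ∃ x ∈ Simp m, v = minPure A x} := by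
    refine ⟨∑ i, |A i j0|, ?_⟩
    rintro v ⟨x, hx, rfl⟩
    exact (minPure_le A x j0).trans (hbound x hx)
  apply le_antisymm
  · -- pay A xN yN ≤ matVal A, using wuc
    have h1 : ∀ j, pay A xN yN ≤ purePay A xN j := by
      intro j
      have hpj : (Pi.single j 1 : Fin n → ℝ) ∈ Simp n := pure_mem_Simp j
      have hb := hB _ hpj
      rcases lt_or_eq_of_le hb with h | h
      · have := (hwuc.2 yN hyS _ hpj xN hxS).1 h
        rwa [pay_pureRight] at this
      · have := (hwuc.2 yN hyS _ hpj xN hxS).2 h.symm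
        rw [pay_pureRight] at this
        exact le_of_eq this
    have h2 : pay A xN yN ≤ minPure A xN := le_minPure hn A xN _ h1
    exact h2.trans (le_csSup hbddAbove ⟨xN, hxS, rfl⟩)
  · -- matVal A ≤ pay A xN yN
    refine csSup_le ⟨minPure A xN, xN, hxS, rfl⟩ ?_
    rintro v ⟨x, hx, rfl⟩
    have h1 : minPure A x ≤ pay A x yN := by
      rw [pay_eq_sum]
      calc minPure A x = ∑ j, yN j * minPure A x := by
            rw [← Finset.sum_mul, hyS.2, one_mul]
      _ ≤ ∑ j, yN j * purePay A x j :=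
            Finset.sum_le_sum fun j _ =>
              mul_le_mul_of_nonneg_left (minPure_le A x j) (hyS.1 j)
    exact h1.trans (hA x hx)

/-- in a weakly unilaterally competitive game, every Nash equilibrium
`(x^N, y^N)` has payoffs equal to the matrix game values:
`α(x^N,y^N) = v_A` and `β(x^N,y^N) = v_B`. -/
theorem stmt9 {m n : ℕ} (A B : Matrix (Fin m) (Fin n) ℝ) (hwuc : WUC A B) :
    ∀ (xN : Fin m → ℝ) (yN : Fin n → ℝ), isNE A B xN yN →
      pay A xN yN = matVal A ∧ pay B xN yN = matVal Bᵀ := by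
  intro xN yN hNE
  constructor
  · exact keyI A B hwuc xN yN hNE
  · -- apply keyI to the transposed game
    have hwuc' : WUC Bᵀ Aᵀ := by
      constructor
      · intro y₁ hy₁ y₂ hy₂ x hx
        have := hwuc.2 y₁ hy₁ y₂ hy₂ x hx
        simpa [pay_transpose] using this
      · intro x₁ hx₁ x₂ hx₂ y hy
        have := hwuc.1 x₁ hx₁ x₂ hx₂ y hy
        simpa [pay_transpose] using this
    have hNE' : isNE Bᵀ Aᵀ yN xN := by
      obtain ⟨hxS, hyS, hA, hB⟩ := hNE
      refine ⟨hyS, hxS, ?_, ?_⟩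
      · intro y' hy'
        simpa [pay_transpose] using hB y' hy'
      · intro x' hx'
        simpa [pay_transpose] using hA x' hx'
    have := keyI Bᵀ Aᵀ hwuc' yN xN hNE'
    rwa [pay_transpose] at this
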